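/- arXiv:1801.03437 — 2 statements merged into one kernel-verified Lean document; each statement's English description precedes it below -/
import Mathlib

section
/- Let L be a real Hilbert space with a countable Hilbert (complete orthonormal) basis (e_i)_{i ∈ ℕ}, fix an integer d ≥ 1 and constants C > 0, M ≥ 0. Suppose f ∈ L has Fourier coefficients a_i = ⟨f, e_i⟩ satisfying a_i² ≤ M² · exp(−C i^{1/d}) for all i. Then there exist a constant C″ > 0 and a threshold k₀ ∈ ℕ, depending only on C and d, such that for all k ≥ k₀ the truncation g_k = ∑_{i ≤ k} a_i e_i satisfies ‖f − g_k‖_L² ≤ M² · C″ · k^{(d−1)/d} · exp(−C k^{1/d}). In particular, f is nearly exponentially approximated by elements of the span of the first k basis vectors. -/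
open scoped InnerProductSpace

section AuxStmt7

open Real Finset

lemma aux_pow_sub_pow (d : ℕ) {x y : ℝ} (hy : 0 ≤ y) (hxy : y ≤ x) :
    x ^ d - y ^ d ≤ d * x ^ (d - 1) * (x - y) := by
  rw [← geom_sum₂_mul x y d]
  have hx : 0 ≤ x := hy.trans hxy
  have h1 : ∑ i ∈ range d, x ^ i * y ^ (d - 1 - i) ≤ d * x ^ (d - 1) := by
    calc ∑ i ∈ range d, x ^ i * y ^ (d - 1 - i)
        ≤ ∑ _i ∈ range d, x ^ (d - 1) := by
          apply Finset.sum_le_sum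
          intro i hi
          simp only [Finset.mem_range] at hi
          calc x ^ i * y ^ (d - 1 - i) ≤ x ^ i * x ^ (d - 1 - i) :=
                mul_le_mul_of_nonneg_left (pow_le_pow_left₀ hy hxy _) (pow_nonneg hx _)
            _ = x ^ (i + (d - 1 - i)) := (pow_add x i _).symm
            _ = x ^ (d - 1) := by congr 1; omega
      _ = d * x ^ (d - 1) := by rw [Finset.sum_const, Finset.card_range, nsmul_eq_mul]
  exact mul_le_mul_of_nonneg_right h1 (by linarith)

lemma aux_binom (d : ℕ) {c u w : ℝ} (hc : 0 ≤ c) (hu : 0 ≤ u) (huw : u ≤ w) :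
    (u + c * w) ^ d ≤ u ^ d + ((1 + c) ^ d - 1) * w ^ d := by
  have hw : 0 ≤ w := hu.trans huw
  have hcw : 0 ≤ c * w := mul_nonneg hc hw
  have h1 : (u + c * w) ^ d = (∑ i ∈ range d, u ^ i * (c * w) ^ (d - i) * d.choose i) + u ^ d := by
    rw [add_pow, Finset.sum_range_succ]; simp
  have h2 : (w + c * w) ^ d = (∑ i ∈ range d, w ^ i * (c * w) ^ (d - i) * d.choose i) + w ^ d := by
    rw [add_pow, Finset.sum_range_succ]; simp
  have h3 : ∑ i ∈ range d, u ^ i * (c * w) ^ (d - i) * d.choose i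
      ≤ ∑ i ∈ range d, w ^ i * (c * w) ^ (d - i) * d.choose i := by
    apply Finset.sum_le_sum
    intro i _
    have h4 := pow_le_pow_left₀ hu huw i
    have h5 : (0:ℝ) ≤ (c * w) ^ (d - i) * d.choose i := by positivity
    calc u ^ i * (c * w) ^ (d - i) * d.choose i = u ^ i * ((c * w) ^ (d - i) * d.choose i) := by ring
      _ ≤ w ^ i * ((c * w) ^ (d - i) * d.choose i) := mul_le_mul_of_nonneg_right h4 h5
      _ = w ^ i * (c * w) ^ (d - i) * d.choose i := by ring
  have h6 : (w + c * w) ^ d = (1 + c) ^ d * w ^ d := by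
    rw [← mul_pow]; ring_nf
  nlinarith [h3]

lemma aux_ineq1 (d : ℕ) (hd : 1 ≤ d) {k i : ℝ} (hk : 1 ≤ k) (hki : k ≤ i) (hik : i ≤ 2 * k) :
    k ^ ((d:ℝ))⁻¹ + (i - k) / (2 * d * k ^ (((d:ℝ) - 1) / d)) ≤ i ^ ((d:ℝ))⁻¹ := by
  have hd0 : (d:ℝ) ≠ 0 := Nat.cast_ne_zero.mpr (by omega)
  have hk0 : (0:ℝ) ≤ k := by linarith
  have hi0 : (0:ℝ) ≤ i := by linarith
  set x := i ^ ((d:ℝ))⁻¹ with hx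
  set y := k ^ ((d:ℝ))⁻¹ with hy
  have hy0 : 0 ≤ y := Real.rpow_nonneg hk0 _
  have hxy : y ≤ x := Real.rpow_le_rpow hk0 hki (by positivity)
  have hxd : x ^ d = i := Real.rpow_inv_natCast_pow hi0 (by omega)
  have hyd : y ^ d = k := Real.rpow_inv_natCast_pow hk0 (by omega)
  have key := aux_pow_sub_pow d hy0 hxy
  rw [hxd, hyd] at key
  -- x ^ (d-1) = i ^ ((d-1)/d) ≤ 2 * k ^ ((d-1)/d)
  have hxpow : x ^ (d - 1) = i ^ (((d:ℝ) - 1) / d) := by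
    rw [hx, ← Real.rpow_natCast (i ^ ((d:ℝ))⁻¹) (d-1), ← Real.rpow_mul hi0]
    congr 1
    rw [Nat.cast_sub hd]
    push_cast
    field_simp
  have hq : ((d:ℝ) - 1) / d ≤ 1 := by
    rw [div_le_one (by positivity)]; linarith
  have hq0 : 0 ≤ ((d:ℝ) - 1) / d := by
    apply div_nonneg _ (by positivity)
    simp only [sub_nonneg]
    exact_mod_cast hd
  have hbound : i ^ (((d:ℝ) - 1) / d) ≤ 2 * k ^ (((d:ℝ) - 1) / d) := by
    calc i ^ (((d:ℝ) - 1) / d) ≤ (2 * k) ^ (((d:ℝ) - 1) / d) :=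
          Real.rpow_le_rpow hi0 hik hq0
      _ = 2 ^ (((d:ℝ) - 1) / d) * k ^ (((d:ℝ) - 1) / d) :=
          Real.mul_rpow (by norm_num) hk0
      _ ≤ 2 * k ^ (((d:ℝ) - 1) / d) := by
          apply mul_le_mul_of_nonneg_right _ (Real.rpow_nonneg hk0 _)
          calc (2:ℝ) ^ (((d:ℝ) - 1) / d) ≤ 2 ^ (1:ℝ) :=
                Real.rpow_le_rpow_of_exponent_le (by norm_num) hq
            _ = 2 := Real.rpow_one 2
  have hkpos : 0 < k ^ (((d:ℝ) - 1) / d) := Real.rpow_pos_of_pos (by linarith) _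
  have hdpos : (0:ℝ) < d := by positivity
  have h2 : i - k ≤ d * (2 * k ^ (((d:ℝ) - 1) / d)) * (x - y) := by
    calc i - k ≤ d * x ^ (d - 1) * (x - y) := key
      _ ≤ d * (2 * k ^ (((d:ℝ) - 1) / d)) * (x - y) := by
          apply mul_le_mul_of_nonneg_right _ (by linarith)
          rw [hxpow]
          exact mul_le_mul_of_nonneg_left hbound (by positivity)
  have h3 : (i - k) / (2 * d * k ^ (((d:ℝ) - 1) / d)) ≤ x - y := by
    rw [div_le_iff₀ (by positivity)]
    nlinarith [h2]
  linarith

lemma aux_ineq2 (d : ℕ) (hd : 1 ≤ d) {k m : ℝ} (hk : 0 ≤ k) (hkm : k ≤ m) :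
    k ^ ((d:ℝ))⁻¹ + ((2:ℝ) ^ ((d:ℝ))⁻¹ - 1) * m ^ ((d:ℝ))⁻¹ ≤ (k + m) ^ ((d:ℝ))⁻¹ := by
  have hm0 : (0:ℝ) ≤ m := hk.trans hkm
  set c : ℝ := (2:ℝ) ^ ((d:ℝ))⁻¹ - 1 with hcdef
  have hc : 0 ≤ c := by
    simp only [hcdef, sub_nonneg]
    exact Real.one_le_rpow (by norm_num) (by positivity)
  set u := k ^ ((d:ℝ))⁻¹ with hu
  set w := m ^ ((d:ℝ))⁻¹ with hw
  have hu0 : 0 ≤ u := Real.rpow_nonneg hk _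
  have huw : u ≤ w := Real.rpow_le_rpow hk hkm (by positivity)
  have hud : u ^ d = k := Real.rpow_inv_natCast_pow hk (by omega)
  have hwd : w ^ d = m := Real.rpow_inv_natCast_pow hm0 (by omega)
  have h1c : (1 + c) ^ d = 2 := by
    have : (1:ℝ) + c = (2:ℝ) ^ ((d:ℝ))⁻¹ := by rw [hcdef]; ring
    rw [this]
    exact Real.rpow_inv_natCast_pow (by norm_num) (by omega)
  have key := aux_binom d hc hu0 huw
  rw [hud, hwd, h1c] at key
  have hkey : (u + c * w) ^ d ≤ k + m := by linarith
  have h0 : 0 ≤ u + c * w := by positivity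
  calc u + c * w = ((u + c * w) ^ d) ^ ((d:ℝ))⁻¹ :=
        (Real.pow_rpow_inv_natCast h0 (by omega)).symm
    _ ≤ (k + m) ^ ((d:ℝ))⁻¹ := Real.rpow_le_rpow (by positivity) hkey (by positivity)

lemma aux_summable (d : ℕ) (hd : 1 ≤ d) {α : ℝ} (hα : 0 < α) :
    Summable (fun n : ℕ => Real.exp (-α * (n:ℝ) ^ ((d:ℝ))⁻¹)) := by
  rw [← summable_nat_add_iff 1]
  have hfac : (0:ℝ) < (2*d).factorial := by positivity
  apply Summable.of_nonneg_of_le (f := fun n : ℕ => ((2*d).factorial / α ^ (2*d)) * (1/((n:ℝ)+1) ^ 2))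
    (fun n => (Real.exp_pos _).le)
  · intro n
    set m : ℝ := ((n:ℕ):ℝ) + 1 with hm
    have hm0 : (0:ℝ) < m := by positivity
    have hmp0 : (0:ℝ) < m ^ ((d:ℝ))⁻¹ := Real.rpow_pos_of_pos hm0 _
    have ht : 0 < α * m ^ ((d:ℝ))⁻¹ := by positivity
    have h1 : (m ^ ((d:ℝ))⁻¹) ^ (2*d) = m ^ 2 := by
      rw [mul_comm 2 d, pow_mul, Real.rpow_inv_natCast_pow hm0.le (by omega)]
    have h2 : (α * m ^ ((d:ℝ))⁻¹) ^ (2*d) / (2*d).factorial ≤ Real.exp (α * m ^ ((d:ℝ))⁻¹) :=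
      Real.pow_div_factorial_le_exp _ ht.le _
    have h3 : (α * m ^ ((d:ℝ))⁻¹) ^ (2*d) = α ^ (2*d) * m ^ 2 := by
      rw [mul_pow, h1]
    have h4 : Real.exp (-α * (((n:ℕ)+1:ℕ):ℝ) ^ ((d:ℝ))⁻¹)
        = (Real.exp (α * m ^ ((d:ℝ))⁻¹))⁻¹ := by
      rw [← Real.exp_neg]
      push_cast
      ring_nf
      rw [hm, add_comm (n:ℝ) 1]
    rw [h4]
    have h5 : α ^ (2*d) * m ^ 2 / (2*d).factorial ≤ Real.exp (α * m ^ ((d:ℝ))⁻¹) := by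
      rw [← h3]; exact h2
    have hpos : (0:ℝ) < α ^ (2*d) * m ^ 2 / (2*d).factorial := by positivity
    calc (Real.exp (α * m ^ ((d:ℝ))⁻¹))⁻¹
        ≤ (α ^ (2*d) * m ^ 2 / (2*d).factorial)⁻¹ := by
          apply inv_anti₀ hpos h5
      _ = ((2*d).factorial / α ^ (2*d)) * (1/m ^ 2) := by
          field_simp
  · apply Summable.mul_left
    have : Summable (fun n : ℕ => 1/((n:ℝ)) ^ 2) := by
      exact_mod_cast Real.summable_one_div_nat_pow.mpr (le_refl 2)
    have h := (summable_nat_add_iff 1).mpr this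
    simpa using h

set_option maxHeartbeats 1000000 in
lemma aux_tail (d : ℕ) (hd : 1 ≤ d) {C : ℝ} (hC : 0 < C) :
    ∃ C'' : ℝ, 0 < C'' ∧ ∀ k : ℕ, 1 ≤ k →
      ∑' j : ℕ, Real.exp (-C * ((k+1+j : ℕ):ℝ) ^ ((d:ℝ))⁻¹)
        ≤ C'' * (k:ℝ) ^ (((d:ℝ)-1)/d) * Real.exp (-C * (k:ℝ) ^ ((d:ℝ))⁻¹) := by
  have hd0 : (0:ℝ) < d := by positivity
  set c : ℝ := (2:ℝ) ^ ((d:ℝ))⁻¹ - 1 with hcdef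
  have hc : 0 < c := by
    simp only [hcdef, sub_pos]
    apply Real.one_lt_rpow (by norm_num) (by positivity)
  have hsum2 : Summable (fun j : ℕ => Real.exp (-(C*c) * ((j+1 : ℕ):ℝ) ^ ((d:ℝ))⁻¹)) :=
    (summable_nat_add_iff 1).mpr (aux_summable d hd (by positivity))
  set S : ℝ := ∑' j : ℕ, Real.exp (-(C*c) * ((j+1 : ℕ):ℝ) ^ ((d:ℝ))⁻¹) with hSdef
  have hS0 : 0 ≤ S := tsum_nonneg (fun j => (Real.exp_pos _).le)
  refine ⟨2*d/C + S, by positivity, ?_⟩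
  intro k hk
  have hk1 : (1:ℝ) ≤ (k:ℝ) := by exact_mod_cast hk
  have hke : (0:ℝ) < (k:ℝ) ^ (((d:ℝ)-1)/d) := Real.rpow_pos_of_pos (by linarith) _
  have hke1 : (1:ℝ) ≤ (k:ℝ) ^ (((d:ℝ)-1)/d) := by
    apply Real.one_le_rpow hk1
    apply div_nonneg _ (by positivity)
    simp only [sub_nonneg]
    exact_mod_cast hd
  set ε : ℝ := C / (2 * d * (k:ℝ) ^ (((d:ℝ)-1)/d)) with hεdef
  have hε : 0 < ε := by positivity
  -- pointwise bound
  have hpt : ∀ j : ℕ, Real.exp (-C * ((k+1+j : ℕ):ℝ) ^ ((d:ℝ))⁻¹)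
      ≤ Real.exp (-C * (k:ℝ) ^ ((d:ℝ))⁻¹) *
        (Real.exp (-ε * ((j:ℝ)+1)) + Real.exp (-(C*c) * ((j+1 : ℕ):ℝ) ^ ((d:ℝ))⁻¹)) := by
    intro j
    have hicast : ((k+1+j : ℕ):ℝ) = (k:ℝ) + ((j:ℝ)+1) := by push_cast; ring
    rcases le_total (j+1) k with hcase | hcase
    · -- i ≤ 2k : use aux_ineq1
      have hcase' : (j:ℝ) + 1 ≤ (k:ℝ) := by exact_mod_cast hcase
      have h1 := aux_ineq1 d hd (k := (k:ℝ)) (i := (k:ℝ) + ((j:ℝ)+1)) hk1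
        (by linarith) (by linarith)
      have h1' := mul_le_mul_of_nonneg_left h1 hC.le
      rw [mul_add] at h1'
      have h3 : C * (((k:ℝ) + ((j:ℝ)+1) - (k:ℝ)) / (2 * d * (k:ℝ) ^ (((d:ℝ)-1)/d)))
          = ε * ((j:ℝ)+1) := by
        rw [hεdef]; ring
      rw [h3] at h1'
      have h2 : -C * ((k+1+j : ℕ):ℝ) ^ ((d:ℝ))⁻¹
          ≤ -C * (k:ℝ) ^ ((d:ℝ))⁻¹ + -ε * ((j:ℝ)+1) := by
        rw [hicast]; linarith
      calc Real.exp (-C * ((k+1+j : ℕ):ℝ) ^ ((d:ℝ))⁻¹)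
          ≤ Real.exp (-C * (k:ℝ) ^ ((d:ℝ))⁻¹ + -ε * ((j:ℝ)+1)) := Real.exp_le_exp.mpr h2
        _ = Real.exp (-C * (k:ℝ) ^ ((d:ℝ))⁻¹) * Real.exp (-ε * ((j:ℝ)+1)) := Real.exp_add _ _
        _ ≤ _ := by
            apply mul_le_mul_of_nonneg_left _ (Real.exp_pos _).le
            exact le_add_of_nonneg_right (Real.exp_pos _).le
    · -- k ≤ j+1 : use aux_ineq2
      have hcase' : (k:ℝ) ≤ (j:ℝ) + 1 := by exact_mod_cast hcase
      have h1 := aux_ineq2 d hd (k := (k:ℝ)) (m := (j:ℝ)+1) (by linarith) hcase'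
      have hj1 : ((j+1 : ℕ):ℝ) = (j:ℝ) + 1 := by push_cast; ring
      have h1' := mul_le_mul_of_nonneg_left h1 hC.le
      rw [mul_add, ← mul_assoc] at h1'
      have h2 : -C * ((k+1+j : ℕ):ℝ) ^ ((d:ℝ))⁻¹
          ≤ -C * (k:ℝ) ^ ((d:ℝ))⁻¹ + -(C*c) * ((j+1 : ℕ):ℝ) ^ ((d:ℝ))⁻¹ := by
        rw [hicast, hj1]; linarith
      calc Real.exp (-C * ((k+1+j : ℕ):ℝ) ^ ((d:ℝ))⁻¹)
          ≤ Real.exp (-C * (k:ℝ) ^ ((d:ℝ))⁻¹ + -(C*c) * ((j+1 : ℕ):ℝ) ^ ((d:ℝ))⁻¹) :=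
            Real.exp_le_exp.mpr h2
        _ = Real.exp (-C * (k:ℝ) ^ ((d:ℝ))⁻¹) *
            Real.exp (-(C*c) * ((j+1 : ℕ):ℝ) ^ ((d:ℝ))⁻¹) := Real.exp_add _ _
        _ ≤ _ := by
            apply mul_le_mul_of_nonneg_left _ (Real.exp_pos _).le
            exact le_add_of_nonneg_left (Real.exp_pos _).le
  -- summability of LHS
  have hsumL : Summable (fun j : ℕ => Real.exp (-C * ((k+1+j : ℕ):ℝ) ^ ((d:ℝ))⁻¹)) := by
    have h := (summable_nat_add_iff (k+1)).mpr (aux_summable d hd hC)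
    apply h.congr
    intro j
    congr 2
    push_cast
    ring
  -- geometric part
  have hr1 : Real.exp (-ε) < 1 := by
    rw [Real.exp_lt_one_iff]; linarith
  have hr0 : 0 < Real.exp (-ε) := Real.exp_pos _
  have he : ∀ j : ℕ, Real.exp (-ε * ((j:ℝ)+1)) = Real.exp (-ε) * Real.exp (-ε) ^ j := by
    intro j
    rw [← Real.exp_nat_mul, ← Real.exp_add]
    congr 1
    ring
  have hsum1 : Summable (fun j : ℕ => Real.exp (-ε * ((j:ℝ)+1))) := by
    apply (((summable_geometric_of_lt_one hr0.le hr1).mul_left (Real.exp (-ε)))).congr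
    intro j
    rw [he j]
  have hgeosum : ∑' j : ℕ, Real.exp (-ε * ((j:ℝ)+1)) ≤ 1/ε := by
    rw [tsum_congr he, tsum_mul_left, tsum_geometric_of_lt_one hr0.le hr1]
    rw [← div_eq_mul_inv, div_le_div_iff₀ (by linarith) hε]
    have hexp : ε + 1 ≤ Real.exp ε := Real.add_one_le_exp ε
    have hprod : Real.exp ε * Real.exp (-ε) = 1 := by
      rw [← Real.exp_add]; simp
    nlinarith [hr0]
  -- assembly
  have hsumR : Summable (fun j : ℕ => Real.exp (-C * (k:ℝ) ^ ((d:ℝ))⁻¹) *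
      (Real.exp (-ε * ((j:ℝ)+1)) + Real.exp (-(C*c) * ((j+1 : ℕ):ℝ) ^ ((d:ℝ))⁻¹))) :=
    (hsum1.add hsum2).mul_left _
  have hE0 : (0:ℝ) < Real.exp (-C * (k:ℝ) ^ ((d:ℝ))⁻¹) := Real.exp_pos _
  calc ∑' j : ℕ, Real.exp (-C * ((k+1+j : ℕ):ℝ) ^ ((d:ℝ))⁻¹)
      ≤ ∑' j : ℕ, Real.exp (-C * (k:ℝ) ^ ((d:ℝ))⁻¹) *
        (Real.exp (-ε * ((j:ℝ)+1)) + Real.exp (-(C*c) * ((j+1 : ℕ):ℝ) ^ ((d:ℝ))⁻¹)) :=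
        Summable.tsum_le_tsum hpt hsumL hsumR
    _ = Real.exp (-C * (k:ℝ) ^ ((d:ℝ))⁻¹) *
        ((∑' j : ℕ, Real.exp (-ε * ((j:ℝ)+1))) + S) := by
        rw [tsum_mul_left, Summable.tsum_add hsum1 hsum2]
    _ ≤ Real.exp (-C * (k:ℝ) ^ ((d:ℝ))⁻¹) * (1/ε + S) := by
        apply mul_le_mul_of_nonneg_left _ hE0.le
        linarith [hgeosum]
    _ ≤ (2*d/C + S) * (k:ℝ) ^ (((d:ℝ)-1)/d) * Real.exp (-C * (k:ℝ) ^ ((d:ℝ))⁻¹) := by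
        have h1ε : 1/ε = 2*d*(k:ℝ) ^ (((d:ℝ)-1)/d)/C := by
          rw [hεdef, one_div_div]
        have hmain : 1/ε + S ≤ (2*d/C + S) * (k:ℝ) ^ (((d:ℝ)-1)/d) := by
          rw [h1ε]
          have hSk := mul_le_mul_of_nonneg_left hke1 hS0
          have heq : 2*d*(k:ℝ) ^ (((d:ℝ)-1)/d)/C = (2*d/C) * (k:ℝ) ^ (((d:ℝ)-1)/d) := by
            ring
          rw [heq, add_mul]
          linarith
        calc Real.exp (-C * (k:ℝ) ^ ((d:ℝ))⁻¹) * (1/ε + S)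
            ≤ Real.exp (-C * (k:ℝ) ^ ((d:ℝ))⁻¹) * ((2*d/C + S) * (k:ℝ) ^ (((d:ℝ)-1)/d)) :=
              mul_le_mul_of_nonneg_left hmain hE0.le
          _ = (2*d/C + S) * (k:ℝ) ^ (((d:ℝ)-1)/d) * Real.exp (-C * (k:ℝ) ^ ((d:ℝ))⁻¹) := by
              ring

open scoped InnerProductSpace


end AuxStmt7

set_option maxHeartbeats 1000000 in
/-- If `f` in a real Hilbert space with countable Hilbert basis `(e_i)` has Fourier
coefficients `a_i = ⟨f, e_i⟩` with `a_i² ≤ M² exp(-C i^(1/d))`, then there are `C'' > 0` and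
`k₀` (depending only on `C`, `d`) such that for `k ≥ k₀` the truncation
`g_k = ∑_{i ≤ k} a_i e_i` satisfies `‖f - g_k‖² ≤ M² C'' k^((d-1)/d) exp(-C k^(1/d))`. -/
theorem stmt_7 {L : Type*} [NormedAddCommGroup L] [InnerProductSpace ℝ L] [CompleteSpace L]
    (b : HilbertBasis ℕ ℝ L) (d : ℕ) (hd : 1 ≤ d) (C : ℝ) (hC : 0 < C) (M : ℝ) (hM : 0 ≤ M)
    (f : L)
    (hcoeff : ∀ i : ℕ, (⟪f, b i⟫_ℝ) ^ 2 ≤ M ^ 2 * Real.exp (-C * (i : ℝ) ^ ((d : ℝ)⁻¹))) :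
    ∃ C'' : ℝ, 0 < C'' ∧ ∃ k₀ : ℕ, ∀ k : ℕ, k₀ ≤ k →
      ‖f - ∑ i ∈ Finset.range (k + 1), ⟪f, b i⟫_ℝ • b i‖ ^ 2 ≤
        M ^ 2 * C'' * (k : ℝ) ^ (((d : ℝ) - 1) / d) *
          Real.exp (-C * (k : ℝ) ^ ((d : ℝ)⁻¹)) := by
  obtain ⟨C'', hC''pos, htail⟩ := aux_tail d hd hC
  refine ⟨C'', hC''pos, 1, ?_⟩
  intro k hk
  -- Parseval
  have hP : HasSum (fun i : ℕ => (⟪f, b i⟫_ℝ) ^ 2) (‖f‖ ^ 2) := by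
    have h := b.hasSum_inner_mul_inner f f
    have h1 : (fun i : ℕ => ⟪f, b i⟫_ℝ * ⟪b i, f⟫_ℝ) = fun i : ℕ => (⟪f, b i⟫_ℝ) ^ 2 := by
      funext i
      rw [real_inner_comm (b i) f]
      ring
    rw [h1] at h
    rwa [real_inner_self_eq_norm_sq] at h
  have hsumsq : Summable (fun i : ℕ => (⟪f, b i⟫_ℝ) ^ 2) := hP.summable
  -- norm of the residual
  have hnorm : ‖f - ∑ i ∈ Finset.range (k + 1), ⟪f, b i⟫_ℝ • b i‖ ^ 2
      = ‖f‖ ^ 2 - ∑ i ∈ Finset.range (k + 1), (⟪f, b i⟫_ℝ) ^ 2 := by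
    set g := ∑ i ∈ Finset.range (k + 1), ⟪f, b i⟫_ℝ • b i with hg
    have hfg : ⟪f, g⟫_ℝ = ∑ i ∈ Finset.range (k + 1), (⟪f, b i⟫_ℝ) ^ 2 := by
      rw [hg, inner_sum]
      apply Finset.sum_congr rfl
      intro i _
      rw [real_inner_smul_right]
      ring
    have hgg : ‖g‖ ^ 2 = ∑ i ∈ Finset.range (k + 1), (⟪f, b i⟫_ℝ) ^ 2 := by
      rw [← real_inner_self_eq_norm_sq, hg,
        b.orthonormal.inner_sum (fun i => ⟪f, b i⟫_ℝ) (fun i => ⟪f, b i⟫_ℝ)]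
      apply Finset.sum_congr rfl
      intro i _
      simp [sq]
    have hexpand : ‖f - g‖ ^ 2 = ‖f‖ ^ 2 - 2 * ⟪f, g⟫_ℝ + ‖g‖ ^ 2 := by
      rw [← real_inner_self_eq_norm_sq, inner_sub_sub_self, ← real_inner_self_eq_norm_sq,
        ← real_inner_self_eq_norm_sq, real_inner_comm g f]
      ring
    rw [hexpand, hfg, hgg]
    ring
  -- tail identity
  set Sc : Set ℕ := (↑(Finset.range (k + 1)) : Set ℕ)ᶜ with hSc
  have htailid := Summable.sum_add_tsum_compl (s := Finset.range (k + 1)) hsumsq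
  rw [hP.tsum_eq] at htailid
  have hres : ‖f - ∑ i ∈ Finset.range (k + 1), ⟪f, b i⟫_ℝ • b i‖ ^ 2
      = ∑' i : Sc, (⟪f, b (i : ℕ)⟫_ℝ) ^ 2 := by
    rw [hnorm]
    linarith [htailid]
  rw [hres]
  -- compare with the exponential bound on the complement
  have hsumexp : Summable (fun i : ℕ => M ^ 2 * Real.exp (-C * (i : ℝ) ^ ((d : ℝ)⁻¹))) :=
    (aux_summable d hd hC).mul_left _
  have hstep1 : ∑' i : Sc, (⟪f, b (i : ℕ)⟫_ℝ) ^ 2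
      ≤ ∑' i : Sc, M ^ 2 * Real.exp (-C * ((i : ℕ) : ℝ) ^ ((d : ℝ)⁻¹)) :=
    Summable.tsum_le_tsum (fun i => hcoeff i) (hsumsq.subtype _) (hsumexp.subtype _)
  -- reindex the complement by shifting
  have hkk : ∀ j : ℕ, k + 1 + j ∈ Sc := by
    intro j
    simp only [hSc, Set.mem_compl_iff, Finset.coe_range, Set.mem_Iio, not_lt]
    omega
  have hmem : ∀ x : Sc, k + 1 ≤ (x : ℕ) := by
    intro x
    have hx := x.2
    simp only [hSc, Set.mem_compl_iff, Finset.coe_range, Set.mem_Iio, not_lt] at hx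
    exact hx
  let e : ℕ ≃ Sc :=
    { toFun := fun j => ⟨k + 1 + j, hkk j⟩
      invFun := fun x => (x : ℕ) - (k + 1)
      left_inv := fun j => by simp
      right_inv := fun x => by
        have hx := hmem x
        apply Subtype.ext
        simp only []
        omega }
  have hreindex : ∑' i : Sc, M ^ 2 * Real.exp (-C * ((i : ℕ) : ℝ) ^ ((d : ℝ)⁻¹))
      = M ^ 2 * ∑' j : ℕ, Real.exp (-C * ((k + 1 + j : ℕ) : ℝ) ^ ((d : ℝ)⁻¹)) := by
    rw [← e.tsum_eq (fun i : Sc => M ^ 2 * Real.exp (-C * ((i : ℕ) : ℝ) ^ ((d : ℝ)⁻¹))),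
      tsum_mul_left]
    rfl
  have hfinal := htail k hk
  calc ∑' i : Sc, (⟪f, b (i : ℕ)⟫_ℝ) ^ 2
      ≤ M ^ 2 * ∑' j : ℕ, Real.exp (-C * ((k + 1 + j : ℕ) : ℝ) ^ ((d : ℝ)⁻¹)) := by
        rw [← hreindex]; exact hstep1
    _ ≤ M ^ 2 * (C'' * (k : ℝ) ^ (((d : ℝ) - 1) / d) * Real.exp (-C * (k : ℝ) ^ ((d : ℝ)⁻¹))) :=
        mul_le_mul_of_nonneg_left hfinal (by positivity)
    _ = M ^ 2 * C'' * (k : ℝ) ^ (((d : ℝ) - 1) / d) * Real.exp (-C * (k : ℝ) ^ ((d : ℝ)⁻¹)) := by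
        ring
end

section
/- Let X be a set and let S be a finite-dimensional linear subspace of the real vector space of functions X → ℝ, with dim S = n. Let m ≥ n + 2, let x₁, …, x_m ∈ X be any points and s₁, …, s_m ∈ ℝ any thresholds. Then there exists a sign assignment σ : {1, …, m} → {−1, +1} that is not realizable by S: there is no g ∈ S such that for all i, g(x_i) > s_i whenever σ_i = +1 and g(x_i) < s_i whenever σ_i = −1. (Equivalently, the VC dimension of the subgraph sets {(x, t) ∈ X × ℝ : g(x) < t}, g ∈ S, is at most dim S + 1.) -/
set_option maxHeartbeats 1000000


/-- If `S` is an `n`-dimensional linear subspace of functions `X → ℝ` and `m ≥ n + 2`, then for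
any points `x₁, …, x_m` and thresholds `s₁, …, s_m` there is a sign assignment `σ ∈ {±1}^m`
that is not realizable by any `g ∈ S` (with strict inequalities `g(x_i) > s_i` when `σ_i = 1`
and `g(x_i) < s_i` when `σ_i = -1`). -/
theorem stmt_8 {X : Type*} (S : Submodule ℝ (X → ℝ)) [FiniteDimensional ℝ S] (n : ℕ)
    (hn : Module.finrank ℝ S = n) (m : ℕ) (hm : n + 2 ≤ m) (x : Fin m → X) (s : Fin m → ℝ) :
    ∃ σ : Fin m → ℝ, (∀ i, σ i = 1 ∨ σ i = -1) ∧
      ¬ ∃ g ∈ S, ∀ i, (σ i = 1 → s i < g (x i)) ∧ (σ i = -1 → g (x i) < s i) := by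
  classical
  -- The functionals `L i (g, t) = g (x i) - t * s i` on `S × ℝ`.
  set L : Fin m → Module.Dual ℝ (S × ℝ) := fun i =>
    ((LinearMap.proj (x i)).comp S.subtype).comp (LinearMap.fst ℝ S ℝ)
      - s i • (LinearMap.snd ℝ S ℝ) with hL
  have hLapp : ∀ i (g : S) (t : ℝ), L i (g, t) = (g : X → ℝ) (x i) - t * s i := by
    intro i g t
    simp [hL, mul_comm]
  -- `S × ℝ` has dimension `n + 1`, hence so does its dual; `m ≥ n + 2` vectors are dependent.
  have hdep : ¬ LinearIndependent ℝ L := by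
    intro hind
    have hcard := hind.fintype_card_le_finrank
    rw [Subspace.dual_finrank_eq] at hcard
    simp [Module.finrank_prod, hn, Fintype.card_fin] at hcard
    omega
  rw [Fintype.not_linearIndependent_iff] at hdep
  obtain ⟨a, hsum, j, hj⟩ := hdep
  refine ⟨fun i => if 0 < a i then -1 else 1, fun i => by by_cases h : 0 < a i <;> simp [h], ?_⟩
  rintro ⟨g, hg, hreal⟩
  -- Evaluate the dependence at `(⟨g, hg⟩, 1)`.
  have h0 : ∑ i, a i * ((g (x i)) - s i) = 0 := by
    have := congrArg (fun f : Module.Dual ℝ (S × ℝ) => f (⟨g, hg⟩, 1)) hsum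
    simpa [LinearMap.sum_apply, hLapp] using this
  -- But each term is ≤ 0, and the `j`-th is < 0.
  have hterm : ∀ i ∈ Finset.univ, a i * ((g (x i)) - s i) ≤ 0 := by
    intro i _
    rcases lt_trichotomy (a i) 0 with h | h | h
    · have hσ : (if 0 < a i then (-1 : ℝ) else 1) = 1 := by simp [not_lt.mpr h.le]
      have := (hreal i).1 hσ
      nlinarith
    · simp [h]
    · have hσ : (if 0 < a i then (-1 : ℝ) else 1) = -1 := by simp [h]
      have := (hreal i).2 hσ
      nlinarith
  have hjterm : a j * ((g (x j)) - s j) < 0 := by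
    rcases lt_trichotomy (a j) 0 with h | h | h
    · have hσ : (if 0 < a j then (-1 : ℝ) else 1) = 1 := by simp [not_lt.mpr h.le]
      have := (hreal j).1 hσ
      nlinarith
    · exact absurd h hj
    · have hσ : (if 0 < a j then (-1 : ℝ) else 1) = -1 := by simp [h]
      have := (hreal j).2 hσ
      nlinarith
  have : ∑ i, a i * ((g (x i)) - s i) < 0 := by
    calc ∑ i, a i * ((g (x i)) - s i) < ∑ _i : Fin m, (0 : ℝ) :=
          Finset.sum_lt_sum hterm ⟨j, Finset.mem_univ j, hjterm⟩
      _ = 0 := by simp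
  linarith
end
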